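/- arXiv:2502.19362 — 3 statements merged into one kernel-verified Lean document; each statement's English description precedes it below -/
import Mathlib

section
/- For any complex number x with Im(x) > 0 and any positive integer n, |cot(πnx) - (-i)| ≤ 2/(e^{2πn·Im(x)} - 1). -/
open Real

theorem stmt0 (x : ℂ) (hx : 0 < x.im) (n : ℕ) (hn : 0 < n) :
    ‖Complex.cot (π * n * x) - (-Complex.I)‖ ≤
      2 / (Real.exp (2 * π * n * x.im) - 1) := by
  set z : ℂ := π * n * x with hz
  have himz : z.im = π * n * x.im := by
    simp [hz, Complex.mul_im]
  have ht : (0:ℝ) < 2 * π * n * x.im := by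
    have : (0:ℝ) < (n:ℝ) := by exact_mod_cast hn
    positivity
  set q : ℂ := Complex.exp (2 * Complex.I * z) with hq
  have habsq : ‖q‖ = Real.exp (-(2 * π * n * x.im)) := by
    rw [hq, Complex.norm_exp]
    congr 1
    simp [Complex.mul_re, Complex.mul_im, himz]
    ring
  have hqlt : ‖q‖ < 1 := by
    rw [habsq]
    exact Real.exp_lt_one_iff.mpr (by linarith)
  have hqne : (1:ℂ) - q ≠ 0 := by
    intro h
    have : q = 1 := by linear_combination -h
    rw [this] at hqlt
    simp at hqlt
  have hkey : Complex.cot z - (-Complex.I) = 2 * q / (Complex.I * (1 - q)) := by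
    rw [Complex.cot_eq_exp_ratio, ← hq]
    have hI : Complex.I * (1 - q) ≠ 0 := mul_ne_zero Complex.I_ne_zero hqne
    field_simp
    ring_nf
    rw [Complex.I_sq]
    ring
  rw [hkey, norm_div, norm_mul, norm_mul, Complex.norm_I, one_mul, Complex.norm_two]
  have hden : 1 - ‖q‖ ≤ ‖1 - q‖ := by
    have := norm_sub_norm_le (1:ℂ) q
    simpa using this
  have hdenpos : 0 < 1 - ‖q‖ := by linarith
  have h1 : 2 * ‖q‖ / ‖1 - q‖ ≤
      2 * ‖q‖ / (1 - ‖q‖) := by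
    apply div_le_div_of_nonneg_left _ hdenpos hden
    positivity
  refine h1.trans (le_of_eq ?_)
  have hexp1 : 1 < Real.exp (2 * π * n * x.im) := Real.one_lt_exp_iff.mpr ht
  rw [habsq, Real.exp_neg]
  rw [div_eq_div_iff (by have h := inv_lt_one_of_one_lt₀ hexp1; intro h0; linarith) (by linarith)]
  field_simp
end

section
/- Let p ∈ (0,1), let S_n be a binomial random variable with parameters n and p, and define e_n = E[(√(S_n/n) - √p)²]. Then n·e_n → (1-p)/4 as n → ∞. -/
open Filter

lemma fallMoment (x y : ℝ) : ∀ (j n : ℕ),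
    ∑ k ∈ Finset.range (n + 1), (k.descFactorial j : ℝ) * (n.choose k : ℝ) * x ^ k * y ^ (n - k)
      = (n.descFactorial j : ℝ) * x ^ j * (x + y) ^ (n - j) := by
  intro j
  induction j with
  | zero =>
    intro n
    simp only [Nat.descFactorial_zero, Nat.cast_one, one_mul, pow_zero, Nat.sub_zero]
    rw [add_pow]
    exact Finset.sum_congr rfl fun k hk => by ring
  | succ j ih =>
    intro n
    cases n with
    | zero => simp
    | succ n =>
      rw [Finset.sum_range_succ']
      have h0 : ((Nat.descFactorial 0 (j+1) : ℝ)) * ((n+1).choose 0 : ℝ) * x ^ 0 * y ^ (n+1-0) = 0 := by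
        simp
      rw [h0, add_zero]
      have hterm : ∀ i ∈ Finset.range (n+1),
          ((i+1).descFactorial (j+1) : ℝ) * ((n+1).choose (i+1) : ℝ) * x ^ (i+1) * y ^ (n+1-(i+1))
          = ((n:ℝ)+1) * x * ((i.descFactorial j : ℝ) * (n.choose i : ℝ) * x ^ i * y ^ (n-i)) := by
        intro i hi
        have hc : ((n+1 : ℕ) : ℝ) * (n.choose i : ℝ) = ((n+1).choose (i+1) : ℝ) * ((i+1 : ℕ) : ℝ) := by
          rw [← Nat.cast_mul, ← Nat.cast_mul, Nat.add_one_mul_choose_eq]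
        have hd : ((i+1).descFactorial (j+1) : ℝ) = ((i+1 : ℕ) : ℝ) * (i.descFactorial j : ℝ) := by
          rw [Nat.succ_descFactorial_succ, Nat.cast_mul]
        have hy : n + 1 - (i + 1) = n - i := by omega
        rw [hd, hy]
        push_cast at hc ⊢
        linear_combination (↑(Nat.descFactorial i j) * x ^ (i+1) * y ^ (n-i)) * hc.symm
      rw [Finset.sum_congr rfl hterm, ← Finset.mul_sum, ih n]
      have hd : ((n+1).descFactorial (j+1) : ℝ) = ((n:ℝ)+1) * (n.descFactorial j : ℝ) := by
        rw [Nat.succ_descFactorial_succ, Nat.cast_mul]; push_cast; ring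
      have hy : n + 1 - (j + 1) = n - j := by omega
      rw [hd, hy]
      ring

lemma castD2 (k : ℕ) : (k.descFactorial 2 : ℝ) = k * (k - 1) :=
  by exact_mod_cast Nat.cast_descFactorial_two (S := ℝ) k

lemma castD3 (k : ℕ) : (k.descFactorial 3 : ℝ) = k * (k - 1) * (k - 2) := by
  match k with
  | 0 => norm_num [Nat.descFactorial]
  | 1 => norm_num [Nat.descFactorial]
  | 2 => norm_num [Nat.descFactorial]
  | (m+3) =>
    rw [show m+3 = (m+2)+1 from rfl, Nat.succ_descFactorial_succ,
      show m+2 = (m+1)+1 from rfl, Nat.succ_descFactorial_succ,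
      Nat.succ_descFactorial_succ, Nat.descFactorial_zero]
    push_cast; ring

lemma castD4 (k : ℕ) : (k.descFactorial 4 : ℝ) = k * (k - 1) * (k - 2) * (k - 3) := by
  match k with
  | 0 => norm_num [Nat.descFactorial]
  | 1 => norm_num [Nat.descFactorial]
  | 2 => norm_num [Nat.descFactorial]
  | 3 => norm_num [Nat.descFactorial]
  | (m+4) =>
    rw [show m+4 = (m+3)+1 from rfl, Nat.succ_descFactorial_succ,
      show m+3 = (m+2)+1 from rfl, Nat.succ_descFactorial_succ,
      show m+2 = (m+1)+1 from rfl, Nat.succ_descFactorial_succ,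
      Nat.succ_descFactorial_succ, Nat.descFactorial_zero]
    push_cast; ring


lemma momD (p : ℝ) (j n : ℕ) :
    ∑ k ∈ Finset.range (n+1), (k.descFactorial j : ℝ) * ((n.choose k : ℝ) * p^k * (1-p)^(n-k))
      = (n.descFactorial j : ℝ) * p^j := by
  have h := fallMoment p (1-p) j n
  rw [show p + (1-p) = 1 by ring, one_pow, mul_one] at h
  rw [← h]
  exact Finset.sum_congr rfl fun k _ => by ring

lemma momS0 (p : ℝ) (n : ℕ) :
    ∑ k ∈ Finset.range (n+1), ((n.choose k : ℝ) * p^k * (1-p)^(n-k)) = 1 := by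
  have h := momD p 0 n
  simpa using h

lemma momS1 (p : ℝ) (n : ℕ) :
    ∑ k ∈ Finset.range (n+1), (k:ℝ) * ((n.choose k : ℝ) * p^k * (1-p)^(n-k)) = n * p := by
  have h := momD p 1 n
  simpa using h

lemma momV2 (p : ℝ) (n : ℕ) :
    ∑ k ∈ Finset.range (n+1), ((k:ℝ) - n*p)^2 * ((n.choose k : ℝ) * p^k * (1-p)^(n-k))
      = n * p * (1-p) := by
  set c : ℝ := n * p with hc
  have step : ∀ k ∈ Finset.range (n+1),
      ((k:ℝ) - c)^2 * ((n.choose k : ℝ) * p^k * (1-p)^(n-k))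
      = (k.descFactorial 2 : ℝ) * ((n.choose k : ℝ) * p^k * (1-p)^(n-k))
        + (1-2*c) * ((k:ℝ) * ((n.choose k : ℝ) * p^k * (1-p)^(n-k)))
        + c^2 * ((n.choose k : ℝ) * p^k * (1-p)^(n-k)) := by
    intro k _
    rw [castD2]; ring
  rw [Finset.sum_congr rfl step]
  simp only [Finset.sum_add_distrib, ← Finset.mul_sum]
  rw [momD p 2 n, momS1, momS0, castD2]
  ring

lemma momV4 (p : ℝ) (n : ℕ) :
    ∑ k ∈ Finset.range (n+1), ((k:ℝ) - n*p)^4 * ((n.choose k : ℝ) * p^k * (1-p)^(n-k))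
      = 3*(n:ℝ)^2*p^2*(1-p)^2 + n*p*(1-p)*(1-6*p*(1-p)) := by
  set c : ℝ := n * p with hc
  have step : ∀ k ∈ Finset.range (n+1),
      ((k:ℝ) - c)^4 * ((n.choose k : ℝ) * p^k * (1-p)^(n-k))
      = (k.descFactorial 4 : ℝ) * ((n.choose k : ℝ) * p^k * (1-p)^(n-k))
        + (6-4*c) * ((k.descFactorial 3 : ℝ) * ((n.choose k : ℝ) * p^k * (1-p)^(n-k)))
        + (7-12*c+6*c^2) * ((k.descFactorial 2 : ℝ) * ((n.choose k : ℝ) * p^k * (1-p)^(n-k)))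
        + (1-4*c+6*c^2-4*c^3) * ((k:ℝ) * ((n.choose k : ℝ) * p^k * (1-p)^(n-k)))
        + c^4 * ((n.choose k : ℝ) * p^k * (1-p)^(n-k)) := by
    intro k _
    rw [castD2, castD3, castD4]; ring
  rw [Finset.sum_congr rfl step]
  simp only [Finset.sum_add_distrib, ← Finset.mul_sum]
  rw [momD p 4 n, momD p 3 n, momD p 2 n, momS1, momS0, castD2, castD3, castD4]
  ring

lemma cubicAbs (a t : ℝ) (ht : 0 < t) : a^2 * |a| ≤ a^4 / t + t * a^2 := by
  have h : a^4 / t + t * a^2 = (a^4 + t^2*a^2) / t := by field_simp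
  rw [h, le_div_iff₀ ht]
  nlinarith [mul_nonneg (sq_nonneg a) (sq_nonneg (|a| - t)), sq_abs a,
    mul_nonneg (mul_nonneg (sq_nonneg a) (abs_nonneg a)) ht.le]

lemma ptA (p x : ℝ) (hp0 : 0 < p) (hp1 : p < 1) (hx0 : 0 ≤ x) (hx1 : x ≤ 1) :
    |4*p*(Real.sqrt x - Real.sqrt p)^2 - (x - p)^2|
      ≤ 4/(p*Real.sqrt p) * ((x-p)^2 * |x - p|) := by
  set s := Real.sqrt x with hsdef
  set r := Real.sqrt p with hrdef
  have hs0 : 0 ≤ s := Real.sqrt_nonneg x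
  have hr0 : 0 < r := Real.sqrt_pos.mpr hp0
  have hs1 : s ≤ 1 := Real.sqrt_le_one.mpr hx1
  have hr1 : r ≤ 1 := Real.sqrt_le_one.mpr hp1.le
  have hx : s^2 = x := Real.sq_sqrt hx0
  have hpp : r^2 = p := Real.sq_sqrt hp0.le
  rw [← hx, ← hpp]
  have key1 : 4*r^2*(s-r)^2 - (s^2-r^2)^2 = (s-r)^2*((r-s)*(3*r+s)) := by ring
  rw [key1, abs_mul, abs_mul, abs_of_nonneg (sq_nonneg (s-r)),
    abs_of_nonneg (by linarith : (0:ℝ) ≤ 3*r+s), abs_sub_comm r s]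
  have h2 : |s^2 - r^2| = |s - r| * (s + r) := by
    rw [show s^2-r^2 = (s-r)*(s+r) by ring, abs_mul,
      abs_of_nonneg (by linarith : (0:ℝ) ≤ s+r)]
  rw [h2, show (s^2-r^2)^2 = (s-r)^2*(s+r)^2 by ring,
    div_mul_eq_mul_div, le_div_iff₀ (by positivity)]
  have hc : r ≤ s + r := by linarith
  have hcube : r^3 ≤ (s+r)^3 := pow_le_pow_left₀ hr0.le hc 3
  have hkey : (3*r+s)*(r^2*r) ≤ 4*((s+r)^2*(s+r)) := by nlinarith [pow_pos hr0 3]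
  nlinarith [mul_le_mul_of_nonneg_left hkey
    (mul_nonneg (sq_nonneg (s-r)) (abs_nonneg (s-r)))]



lemma cubicAbs' (a t : ℝ) (ht : 0 < t) : a^2 * |a| ≤ a^4 * t + a^2 / t := by
  rw [show a^4*t + a^2/t = (a^4*t^2 + a^2)/t by field_simp, le_div_iff₀ ht]
  rcases le_or_gt (|a| * t) 1 with h | h
  · have h1 : a^2 * |a| * t ≤ a^2 := by
      calc a^2 * |a| * t = a^2 * (|a| * t) := by ring
        _ ≤ a^2*1 := mul_le_mul_of_nonneg_left h (sq_nonneg a)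
        _ = a^2 := mul_one _
    nlinarith [sq_nonneg (a^2*t)]
  · have h2 : a^2 * |a| * t ≤ (a^2 * |a| * t)*(|a| * t) :=
      le_mul_of_one_le_right (by positivity) h.le
    have h3 : (a^2 * |a| * t)*(|a| * t) = a^4*t^2 := by
      rw [show (a^2 * |a| * t)*(|a| * t) = a^2 * (|a| * |a|) * t^2 by ring, abs_mul_abs_self]
      ring
    nlinarith [sq_nonneg a]

lemma finalA (p s : ℝ) (hp0 : 0 < p) (hq0 : 0 < 1-p) (hpq : p*(1-p) ≤ 1/4)
    (hs : 0 < s) :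
    (s*s)/(4*p) * (4/(p*Real.sqrt p) * (4/(s*s)^2*s + p*(1-p)/(s*s)/s))
      ≤ 17/(4*p^2*Real.sqrt p)/s := by
  have hr0 : 0 < Real.sqrt p := Real.sqrt_pos.mpr hp0
  set r := Real.sqrt p with hr
  have hL : (s*s)/(4*p) * (4/(p*r) * (4/(s*s)^2*s + p*(1-p)/(s*s)/s))
      = (4 + p*(1-p))/(p^2*r*s) := by
    field_simp
  rw [hL, div_div, div_le_div_iff₀ (by positivity) (by positivity)]
  nlinarith [hpq, mul_pos (mul_pos (mul_pos hp0 hp0) hr0) hs,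
    mul_pos hp0 (mul_pos hp0 (mul_pos hr0 hs))]

theorem stmt13 (p : ℝ) (hp : p ∈ Set.Ioo (0 : ℝ) 1) :
    Tendsto (fun n : ℕ =>
        (n : ℝ) * ∑ m ∈ Finset.range (n + 1),
          (Real.sqrt (m / n) - Real.sqrt p) ^ 2 *
            ((n.choose m : ℝ) * p ^ m * (1 - p) ^ (n - m)))
      atTop (nhds ((1 - p) / 4)) := by
  obtain ⟨hp0, hp1⟩ := hp
  have hq0 : 0 < 1 - p := by linarith
  have hr0 : 0 < Real.sqrt p := Real.sqrt_pos.mpr hp0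
  set K : ℝ := 17/(4*p^2*Real.sqrt p) with hK
  have hpq : p * (1-p) ≤ 1/4 := by nlinarith [sq_nonneg (2*p-1)]
  have main : ∀ n : ℕ, 1 ≤ n →
      |(n : ℝ) * (∑ m ∈ Finset.range (n + 1),
          (Real.sqrt ((m:ℝ) / (n:ℝ)) - Real.sqrt p) ^ 2 *
            ((n.choose m : ℝ) * p ^ m * (1 - p) ^ (n - m))) - (1-p)/4|
        ≤ K / Real.sqrt n := by
    intro n hn
    have hN0 : (0:ℝ) < n := by exact_mod_cast hn
    have hN1 : (1:ℝ) ≤ n := by exact_mod_cast hn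
    set N : ℝ := (n:ℝ) with hNdef
    have hs0 : 0 < Real.sqrt N := Real.sqrt_pos.mpr hN0
    have hss : Real.sqrt N * Real.sqrt N = N := Real.mul_self_sqrt hN0.le
    set W : ℕ → ℝ := fun k => (n.choose k : ℝ) * p^k * (1-p)^(n-k) with hW
    have hw : ∀ k, 0 ≤ W k := by
      intro k
      have h1 : (0:ℝ) ≤ p := hp0.le
      have h2 : (0:ℝ) ≤ 1 - p := hq0.le
      positivity
    have hv2 : ∑ k ∈ Finset.range (n+1), ((k:ℝ)/N - p)^2 * W k = p*(1-p)/N := by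
      have hc : ∀ k ∈ Finset.range (n+1),
          ((k:ℝ)/N - p)^2 * W k = (1/N^2) * (((k:ℝ) - N*p)^2 * W k) := by
        intro k _
        field_simp
      rw [Finset.sum_congr rfl hc, ← Finset.mul_sum, momV2 p n, ← hNdef]
      field_simp
    have hv4 : ∑ k ∈ Finset.range (n+1), ((k:ℝ)/N - p)^4 * W k ≤ 4/N^2 := by
      have hc : ∀ k ∈ Finset.range (n+1),
          ((k:ℝ)/N - p)^4 * W k = (1/N^4) * (((k:ℝ) - N*p)^4 * W k) := by
        intro k _
        field_simp
      rw [Finset.sum_congr rfl hc, ← Finset.mul_sum, momV4 p n, ← hNdef]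
      have hb : 3*N^2*p^2*(1-p)^2 + N*p*(1-p)*(1-6*p*(1-p)) ≤ 4*N^2 := by
        have hu0 : 0 < p*(1-p) := mul_pos hp0 hq0
        have hu2 : (p*(1-p))*(p*(1-p)) ≤ (1/4)*(1/4) :=
          mul_le_mul hpq hpq hu0.le (by norm_num)
        nlinarith [hu0, hpq, hN1, hN0.le, sq_nonneg N, hu2,
          mul_le_mul_of_nonneg_left hpq hN0.le,
          mul_le_mul_of_nonneg_left hu2 (sq_nonneg N),
          mul_le_mul_of_nonneg_left hN1 hN0.le,
          mul_nonneg (mul_nonneg hN0.le hu0.le) hu0.le]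
      calc (1/N^4) * (3*N^2*p^2*(1-p)^2 + N*p*(1-p)*(1-6*p*(1-p)))
          ≤ (1/N^4) * (4*N^2) := mul_le_mul_of_nonneg_left hb (by positivity)
        _ = 4/N^2 := by field_simp
    set A : ℝ := ∑ k ∈ Finset.range (n+1),
        (4*p*(Real.sqrt ((k:ℝ)/N) - Real.sqrt p)^2 - ((k:ℝ)/N - p)^2) * W k with hA
    have hsplit : A = 4*p*(∑ m ∈ Finset.range (n+1),
          (Real.sqrt ((m:ℝ)/N) - Real.sqrt p)^2 * W m) - p*(1-p)/N := by
      calc A = (∑ k ∈ Finset.range (n+1),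
              (4*p*((Real.sqrt ((k:ℝ)/N) - Real.sqrt p)^2 * W k)
                - ((k:ℝ)/N - p)^2 * W k)) :=
            Finset.sum_congr rfl fun k _ => by ring
        _ = (∑ k ∈ Finset.range (n+1),
              4*p*((Real.sqrt ((k:ℝ)/N) - Real.sqrt p)^2 * W k))
            - ∑ k ∈ Finset.range (n+1), ((k:ℝ)/N - p)^2 * W k :=
            Finset.sum_sub_distrib _ _
        _ = 4*p*(∑ m ∈ Finset.range (n+1),
              (Real.sqrt ((m:ℝ)/N) - Real.sqrt p)^2 * W m) - p*(1-p)/N := by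
            rw [← Finset.mul_sum, hv2]
    have hrep : (N * ∑ m ∈ Finset.range (n + 1),
          (Real.sqrt ((m:ℝ) / N) - Real.sqrt p) ^ 2 * W m) - (1-p)/4
        = (N/(4*p)) * A := by
      rw [hsplit]
      field_simp
    have habs : |A| ≤ (4/(p*Real.sqrt p)) *
        ((∑ k ∈ Finset.range (n+1), ((k:ℝ)/N - p)^4 * W k) * Real.sqrt N
          + (p*(1-p)/N) / Real.sqrt N) := by
      have h1 : |A| ≤ ∑ k ∈ Finset.range (n+1),
          (4/(p*Real.sqrt p)) * (((k:ℝ)/N - p)^4 * Real.sqrt N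
            + ((k:ℝ)/N - p)^2 / Real.sqrt N) * W k := by
        refine (Finset.abs_sum_le_sum_abs _ _).trans (Finset.sum_le_sum ?_)
        intro k hk
        rw [abs_mul, abs_of_nonneg (hw k)]
        have hk' : k ≤ n := by
          have := Finset.mem_range.mp hk; omega
        have hx0 : (0:ℝ) ≤ (k:ℝ)/N := by positivity
        have hx1 : (k:ℝ)/N ≤ 1 := by
          rw [div_le_one hN0]
          exact Nat.cast_le.mpr hk'
        have h2 := ptA p ((k:ℝ)/N) hp0 hp1 hx0 hx1
        have h3 := cubicAbs' ((k:ℝ)/N - p) (Real.sqrt N) hs0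
        have h4 : |4*p*(Real.sqrt ((k:ℝ)/N) - Real.sqrt p)^2 - ((k:ℝ)/N - p)^2|
            ≤ (4/(p*Real.sqrt p)) * (((k:ℝ)/N - p)^4 * Real.sqrt N
              + ((k:ℝ)/N - p)^2 / Real.sqrt N) := by
          refine h2.trans ?_
          exact mul_le_mul_of_nonneg_left h3 (by positivity)
        exact mul_le_mul_of_nonneg_right h4 (hw k)
      refine h1.trans ?_
      have h5 : ∑ k ∈ Finset.range (n+1),
          (4/(p*Real.sqrt p)) * (((k:ℝ)/N - p)^4 * Real.sqrt N
            + ((k:ℝ)/N - p)^2 / Real.sqrt N) * W k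
          = (4/(p*Real.sqrt p)) *
            ((∑ k ∈ Finset.range (n+1), ((k:ℝ)/N - p)^4 * W k) * Real.sqrt N
              + (∑ k ∈ Finset.range (n+1), ((k:ℝ)/N - p)^2 * W k) / Real.sqrt N) := by
        simp only [Finset.mul_sum, Finset.sum_mul, Finset.sum_div,
          ← Finset.sum_add_distrib]
        exact Finset.sum_congr rfl fun k _ => by ring
      rw [h5, hv2]
    have hstep : |A| ≤ (4/(p*Real.sqrt p)) * ((4/N^2) * Real.sqrt N
        + (p*(1-p)/N) / Real.sqrt N) := by
      refine habs.trans ?_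
      apply mul_le_mul_of_nonneg_left _ (by positivity)
      apply add_le_add_left
      exact mul_le_mul_of_nonneg_right hv4 hs0.le
    rw [hrep, abs_mul, abs_of_nonneg (by positivity : (0:ℝ) ≤ N/(4*p))]
    calc N/(4*p) * |A|
        ≤ N/(4*p) * ((4/(p*Real.sqrt p)) * ((4/N^2) * Real.sqrt N
            + (p*(1-p)/N) / Real.sqrt N)) :=
          mul_le_mul_of_nonneg_left hstep (by positivity)
      _ ≤ K / Real.sqrt N := by
          have hfa := finalA p (Real.sqrt N) hp0 hq0 hpq hs0
          rw [hss] at hfa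
          exact hfa
  -- conclude the limit
  have hsq : Tendsto (fun n : ℕ => Real.sqrt n) atTop atTop := by
    apply Filter.tendsto_atTop_atTop.mpr
    intro b
    refine ⟨(⌈b⌉₊)^2, fun n hn => ?_⟩
    have h1 : (b:ℝ) ≤ (⌈b⌉₊:ℝ) := Nat.le_ceil b
    have h2 : ((⌈b⌉₊:ℝ))^2 ≤ (n:ℝ) := by exact_mod_cast hn
    calc b ≤ (⌈b⌉₊:ℝ) := h1
      _ = Real.sqrt (((⌈b⌉₊:ℝ))^2) := (Real.sqrt_sq (Nat.cast_nonneg _)).symm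
      _ ≤ Real.sqrt n := Real.sqrt_le_sqrt h2
  have hg : Tendsto (fun n : ℕ => K / Real.sqrt n) atTop (nhds 0) :=
    Tendsto.div_atTop tendsto_const_nhds hsq
  have h0 : Tendsto (fun n : ℕ =>
      ((n : ℝ) * ∑ m ∈ Finset.range (n + 1),
          (Real.sqrt (m / n) - Real.sqrt p) ^ 2 *
            ((n.choose m : ℝ) * p ^ m * (1 - p) ^ (n - m))) - (1-p)/4)
      atTop (nhds 0) := by
    refine squeeze_zero_norm' ?_ hg
    refine eventually_atTop.mpr ⟨1, fun n hn => ?_⟩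
    simpa [Real.norm_eq_abs] using main n hn
  exact tendsto_sub_nhds_zero_iff.mp h0
end

section
/- Let p, q > 0 with p + q < 1, and let (S_n, T_n) be the counts of outcomes 1 and 2 in n i.i.d. trials of a trinomial distribution with cell probabilities (p, q, 1-p-q). Define e_n = E[(√(S_n/n) - √p)(√(T_n/n) - √q)]. Then n·e_n → -√(pq)/4 as n → ∞. -/
open Filter Finset

namespace Stmt14Aux

noncomputable def W (p q : ℝ) (n m1 m2 : ℕ) : ℝ :=
  (Nat.factorial n : ℝ) /
      (Nat.factorial m1 * Nat.factorial m2 * Nat.factorial (n - m1 - m2)) *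
    p ^ m1 * q ^ m2 * (1 - p - q) ^ (n - m1 - m2)

noncomputable def E (p q : ℝ) (n : ℕ) (f : ℕ → ℕ → ℝ) : ℝ :=
  ∑ m1 ∈ Finset.range (n + 1), ∑ m2 ∈ Finset.range (n + 1 - m1), f m1 m2 * W p q n m1 m2

lemma E_congr (p q : ℝ) (n : ℕ) {f g : ℕ → ℕ → ℝ}
    (h : ∀ m1 m2, m1 + m2 ≤ n → f m1 m2 = g m1 m2) : E p q n f = E p q n g := by
  unfold E
  refine Finset.sum_congr rfl fun m1 hm1 => Finset.sum_congr rfl fun m2 hm2 => ?_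
  rw [Finset.mem_range] at hm1 hm2
  rw [h m1 m2 (by omega)]

lemma E_add (p q : ℝ) (n : ℕ) (f g : ℕ → ℕ → ℝ) :
    E p q n (fun m1 m2 => f m1 m2 + g m1 m2) = E p q n f + E p q n g := by
  unfold E
  rw [← Finset.sum_add_distrib]
  refine Finset.sum_congr rfl fun m1 _ => ?_
  rw [← Finset.sum_add_distrib]
  exact Finset.sum_congr rfl fun m2 _ => by ring

lemma E_const_mul (p q : ℝ) (n : ℕ) (c : ℝ) (f : ℕ → ℕ → ℝ) :
    E p q n (fun m1 m2 => c * f m1 m2) = c * E p q n f := by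
  unfold E
  rw [Finset.mul_sum]
  refine Finset.sum_congr rfl fun m1 _ => ?_
  rw [Finset.mul_sum]
  exact Finset.sum_congr rfl fun m2 _ => by ring

lemma W_eq_choose (p q : ℝ) {n m1 m2 : ℕ} (h : m1 + m2 ≤ n) :
    W p q n m1 m2 = (n.choose m1 : ℝ) * ((n - m1).choose m2 : ℝ) *
      p ^ m1 * q ^ m2 * (1 - p - q) ^ (n - m1 - m2) := by
  have h1 : m1 ≤ n := le_trans (Nat.le_add_right _ _) h
  have h2 : m2 ≤ n - m1 := by omega
  have e1 : (n.choose m1) * m1.factorial * (n - m1).factorial = n.factorial :=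
    Nat.choose_mul_factorial_mul_factorial h1
  have e2 : ((n - m1).choose m2) * m2.factorial * (n - m1 - m2).factorial
      = (n - m1).factorial := Nat.choose_mul_factorial_mul_factorial h2
  unfold W
  have E1 : (n.factorial : ℝ) = (n.choose m1) * m1.factorial * ((n - m1).factorial) := by
    exact_mod_cast e1.symm
  have E2 : ((n - m1).factorial : ℝ)
      = ((n - m1).choose m2) * m2.factorial * ((n - m1 - m2).factorial) := by
    exact_mod_cast e2.symm
  have f1 : (m1.factorial : ℝ) ≠ 0 := by exact_mod_cast m1.factorial_ne_zero
  have f2 : (m2.factorial : ℝ) ≠ 0 := by exact_mod_cast m2.factorial_ne_zero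
  have f3 : ((n - m1 - m2).factorial : ℝ) ≠ 0 := by exact_mod_cast (n - m1 - m2).factorial_ne_zero
  rw [E1, E2]
  field_simp

lemma mass (p q : ℝ) (n : ℕ) : E p q n (fun _ _ => 1) = 1 := by
  unfold E
  have inner : ∀ m1 ∈ Finset.range (n + 1),
      ∑ m2 ∈ Finset.range (n + 1 - m1), (fun _ _ => (1:ℝ)) m1 m2 * W p q n m1 m2
        = (n.choose m1 : ℝ) * p ^ m1 * (1 - p) ^ (n - m1) := by
    intro m1 hm1
    rw [Finset.mem_range] at hm1
    have hN : n + 1 - m1 = (n - m1) + 1 := by omega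
    rw [hN]
    have : ∀ m2 ∈ Finset.range ((n - m1) + 1),
        (fun _ _ => (1:ℝ)) m1 m2 * W p q n m1 m2
          = (n.choose m1 : ℝ) * p ^ m1 *
            (q ^ m2 * (1 - p - q) ^ (n - m1 - m2) * ((n - m1).choose m2 : ℝ)) := by
      intro m2 hm2
      rw [Finset.mem_range] at hm2
      rw [W_eq_choose p q (by omega : m1 + m2 ≤ n)]
      ring
    rw [Finset.sum_congr rfl this, ← Finset.mul_sum, ← add_pow]
    have : q + (1 - p - q) = 1 - p := by ring
    rw [this]
  rw [Finset.sum_congr rfl inner]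
  have : ∀ m1 ∈ Finset.range (n + 1),
      (n.choose m1 : ℝ) * p ^ m1 * (1 - p) ^ (n - m1)
        = p ^ m1 * (1 - p) ^ (n - m1) * (n.choose m1 : ℝ) := fun m1 _ => by ring
  rw [Finset.sum_congr rfl this, ← add_pow]
  norm_num

lemma W_shift1 (p q : ℝ) {n m1 m2 : ℕ} (h : m1 + m2 ≤ n) :
    ((m1 : ℝ) + 1) * W p q (n + 1) (m1 + 1) m2 = ((n : ℝ) + 1) * p * W p q n m1 m2 := by
  unfold W
  have h1 : n + 1 - (m1 + 1) - m2 = n - m1 - m2 := by omega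
  rw [h1, Nat.factorial_succ (m1), Nat.factorial_succ n]
  have f1 : (m1.factorial : ℝ) ≠ 0 := by exact_mod_cast m1.factorial_ne_zero
  have f2 : (m2.factorial : ℝ) ≠ 0 := by exact_mod_cast m2.factorial_ne_zero
  have f3 : ((n - m1 - m2).factorial : ℝ) ≠ 0 := by exact_mod_cast (n - m1 - m2).factorial_ne_zero
  push_cast
  field_simp
  ring

lemma W_shift2 (p q : ℝ) {n m1 m2 : ℕ} (h : m1 + m2 ≤ n) :
    ((m2 : ℝ) + 1) * W p q (n + 1) m1 (m2 + 1) = ((n : ℝ) + 1) * q * W p q n m1 m2 := by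
  unfold W
  have h1 : n + 1 - m1 - (m2 + 1) = n - m1 - m2 := by omega
  rw [h1, Nat.factorial_succ (m2), Nat.factorial_succ n]
  have f1 : (m1.factorial : ℝ) ≠ 0 := by exact_mod_cast m1.factorial_ne_zero
  have f2 : (m2.factorial : ℝ) ≠ 0 := by exact_mod_cast m2.factorial_ne_zero
  have f3 : ((n - m1 - m2).factorial : ℝ) ≠ 0 := by exact_mod_cast (n - m1 - m2).factorial_ne_zero
  push_cast
  field_simp
  ring

lemma shift1 (p q : ℝ) (n : ℕ) (f : ℕ → ℕ → ℝ) :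
    E p q (n + 1) (fun m1 m2 => (m1 : ℝ) * f m1 m2)
      = ((n : ℝ) + 1) * p * E p q n (fun m1 m2 => f (m1 + 1) m2) := by
  unfold E
  rw [Finset.sum_range_succ']
  simp only [Nat.cast_zero, zero_mul, Finset.sum_const_zero, add_zero]
  rw [Finset.mul_sum]
  refine Finset.sum_congr rfl fun m1 hm1 => ?_
  rw [Finset.mem_range] at hm1
  have hr : n + 1 + 1 - (m1 + 1) = n + 1 - m1 := by omega
  rw [hr, Finset.mul_sum]
  refine Finset.sum_congr rfl fun m2 hm2 => ?_
  rw [Finset.mem_range] at hm2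
  have := W_shift1 p q (by omega : m1 + m2 ≤ n)
  push_cast
  linear_combination f (m1 + 1) m2 * this

lemma shift2 (p q : ℝ) (n : ℕ) (f : ℕ → ℕ → ℝ) :
    E p q (n + 1) (fun m1 m2 => (m2 : ℝ) * f m1 m2)
      = ((n : ℝ) + 1) * q * E p q n (fun m1 m2 => f m1 (m2 + 1)) := by
  unfold E
  rw [Finset.sum_range_succ]
  have hlast : ∑ m2 ∈ Finset.range (n + 1 + 1 - (n + 1)),
      (m2 : ℝ) * f (n + 1) m2 * W p q (n + 1) (n + 1) m2 = 0 := by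
    norm_num
  rw [hlast, add_zero, Finset.mul_sum]
  refine Finset.sum_congr rfl fun m1 hm1 => ?_
  rw [Finset.mem_range] at hm1
  have hr : n + 1 + 1 - m1 = (n + 1 - m1) + 1 := by omega
  rw [hr, Finset.sum_range_succ']
  simp only [Nat.cast_zero, zero_mul, Finset.sum_const_zero, add_zero]
  rw [Finset.mul_sum]
  refine Finset.sum_congr rfl fun m2 hm2 => ?_
  rw [Finset.mem_range] at hm2
  have := W_shift2 p q (by omega : m1 + m2 ≤ n)
  push_cast
  linear_combination f m1 (m2 + 1) * this

lemma W_symm (p q : ℝ) (n m1 m2 : ℕ) : W p q n m1 m2 = W q p n m2 m1 := by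
  unfold W
  rw [Nat.sub_sub, Nat.sub_sub, Nat.add_comm m1 m2]
  have : (1 : ℝ) - p - q = 1 - q - p := by ring
  rw [this]
  ring

lemma inner_ext1 (g : ℕ → ℝ) (k n : ℕ) (hk : k ≤ n) :
    ∑ j ∈ Finset.range (n + 1 - k), g j
      = ∑ j ∈ Finset.range (n + 1), if k + j ≤ n then g j else 0 := by
  rw [← Finset.sum_subset (Finset.range_subset_range.2 (by omega : n + 1 - k ≤ n + 1))
    (fun j hj hj' => by rw [Finset.mem_range] at hj hj'; rw [if_neg (by omega)])]
  refine Finset.sum_congr rfl fun j hj => ?_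
  rw [Finset.mem_range] at hj
  rw [if_pos (by omega)]

lemma inner_ext2 (g : ℕ → ℝ) (k n : ℕ) (hk : k ≤ n) :
    ∑ j ∈ Finset.range (n + 1 - k), g j
      = ∑ j ∈ Finset.range (n + 1), if j + k ≤ n then g j else 0 := by
  rw [inner_ext1 g k n hk]
  exact Finset.sum_congr rfl fun j _ => by rw [Nat.add_comm]

lemma sum_simplex_comm (g : ℕ → ℕ → ℝ) (n : ℕ) :
    ∑ m1 ∈ Finset.range (n + 1), ∑ m2 ∈ Finset.range (n + 1 - m1), g m1 m2
      = ∑ m2 ∈ Finset.range (n + 1), ∑ m1 ∈ Finset.range (n + 1 - m2), g m1 m2 := by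
  have L : ∀ m1 ∈ Finset.range (n + 1),
      ∑ m2 ∈ Finset.range (n + 1 - m1), g m1 m2
        = ∑ m2 ∈ Finset.range (n + 1), if m1 + m2 ≤ n then g m1 m2 else 0 := by
    intro m1 hm1
    rw [Finset.mem_range] at hm1
    exact inner_ext1 (fun m2 => g m1 m2) m1 n (by omega)
  have R : ∀ m2 ∈ Finset.range (n + 1),
      ∑ m1 ∈ Finset.range (n + 1 - m2), g m1 m2
        = ∑ m1 ∈ Finset.range (n + 1), if m1 + m2 ≤ n then g m1 m2 else 0 := by
    intro m2 hm2
    rw [Finset.mem_range] at hm2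
    exact inner_ext2 (fun m1 => g m1 m2) m2 n (by omega)
  rw [Finset.sum_congr rfl L, Finset.sum_congr rfl R, Finset.sum_comm]

lemma E_symm (p q : ℝ) (n : ℕ) (f : ℕ → ℕ → ℝ) :
    E p q n f = E q p n (fun m1 m2 => f m2 m1) := by
  unfold E
  rw [sum_simplex_comm (fun m1 m2 => f m1 m2 * W p q n m1 m2) n]
  exact Finset.sum_congr rfl fun m2 _ => Finset.sum_congr rfl fun m1 _ => by
    rw [W_symm p q n m1 m2]

lemma mom1 (p q : ℝ) (n : ℕ) : E p q n (fun (m1 : ℕ) (_ : ℕ) => (m1 : ℝ)) = n * p := by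
  cases n with
  | zero => simp [E, W]
  | succ n =>
    have step1 : E p q (n + 1) (fun (m1 : ℕ) (_ : ℕ) => (m1 : ℝ))
        = E p q (n + 1) (fun m1 m2 => (m1 : ℝ) * (fun _ _ => (1:ℝ)) m1 m2) :=
      E_congr _ _ _ (fun a b _ => by simp)
    rw [step1, shift1]
    have step2 : E p q n (fun m1 m2 => (fun _ _ => (1:ℝ)) (m1 + 1) m2)
        = E p q n (fun _ _ => (1:ℝ)) := E_congr _ _ _ (fun a b _ => rfl)
    rw [step2, mass]
    push_cast; ring

lemma mom01 (p q : ℝ) (n : ℕ) : E p q n (fun (_ : ℕ) (m2 : ℕ) => (m2 : ℝ)) = n * q := by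
  rw [E_symm]
  have step : E q p n (fun m1 m2 => (fun (_ : ℕ) (m2 : ℕ) => (m2 : ℝ)) m2 m1)
      = E q p n (fun (m1 : ℕ) (_ : ℕ) => (m1 : ℝ)) := E_congr _ _ _ (fun a b _ => rfl)
  rw [step, mom1]

lemma mom2 (p q : ℝ) (n : ℕ) :
    E p q n (fun (m1 : ℕ) (_ : ℕ) => (m1 : ℝ) ^ 2) = n * p + n * ((n : ℝ) - 1) * p ^ 2 := by
  cases n with
  | zero => simp [E, W]
  | succ n =>
    have step1 : E p q (n + 1) (fun (m1 : ℕ) (_ : ℕ) => (m1 : ℝ) ^ 2)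
        = E p q (n + 1) (fun m1 m2 => (m1 : ℝ) * (fun (m1 : ℕ) (_ : ℕ) => (m1 : ℝ)) m1 m2) :=
      E_congr _ _ _ (fun a b _ => by simp only []; ring)
    rw [step1, shift1]
    have step2 : E p q n (fun m1 m2 => (fun (m1 : ℕ) (_ : ℕ) => (m1 : ℝ)) (m1 + 1) m2)
        = E p q n (fun m1 m2 => (fun (m1 : ℕ) (_ : ℕ) => (m1 : ℝ)) m1 m2 + (fun _ _ => (1:ℝ)) m1 m2) :=
      E_congr _ _ _ (fun a b _ => by simp only []; push_cast; ring)
    rw [step2, E_add, mom1, mass]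
    push_cast; ring

lemma mom11 (p q : ℝ) (n : ℕ) :
    E p q n (fun m1 m2 => (m1 : ℝ) * (m2 : ℝ)) = n * ((n : ℝ) - 1) * p * q := by
  cases n with
  | zero => simp [E, W]
  | succ n =>
    have step1 : E p q (n + 1) (fun m1 m2 => (m1 : ℝ) * (m2 : ℝ))
        = E p q (n + 1) (fun m1 m2 => (m1 : ℝ) * (fun (_ : ℕ) (m2 : ℕ) => (m2 : ℝ)) m1 m2) :=
      E_congr _ _ _ (fun a b _ => rfl)
    rw [step1, shift1]
    have step2 : E p q n (fun m1 m2 => (fun (_ : ℕ) (m2 : ℕ) => (m2 : ℝ)) (m1 + 1) m2)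
        = E p q n (fun (_ : ℕ) (m2 : ℕ) => (m2 : ℝ)) := E_congr _ _ _ (fun a b _ => rfl)
    rw [step2, mom01]
    push_cast; ring

lemma mom3 (p q : ℝ) (n : ℕ) :
    E p q n (fun (m1 : ℕ) (_ : ℕ) => (m1 : ℝ) ^ 3)
      = n * p + 3 * n * ((n : ℝ) - 1) * p ^ 2
        + n * ((n : ℝ) - 1) * ((n : ℝ) - 2) * p ^ 3 := by
  cases n with
  | zero => simp [E, W]
  | succ n =>
    have step1 : E p q (n + 1) (fun (m1 : ℕ) (_ : ℕ) => (m1 : ℝ) ^ 3)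
        = E p q (n + 1) (fun m1 m2 => (m1 : ℝ) * (fun (m1 : ℕ) (_ : ℕ) => (m1 : ℝ) ^ 2) m1 m2) :=
      E_congr _ _ _ (fun a b _ => by simp only []; ring)
    rw [step1, shift1]
    have step2 : E p q n (fun m1 m2 => (fun (m1 : ℕ) (_ : ℕ) => (m1 : ℝ) ^ 2) (m1 + 1) m2)
        = E p q n (fun m1 m2 => (fun (m1 : ℕ) (_ : ℕ) => (m1 : ℝ) ^ 2) m1 m2
            + ((fun m1 m2 => (2:ℝ) * (fun (m1 : ℕ) (_ : ℕ) => (m1 : ℝ)) m1 m2) m1 m2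
              + (fun _ _ => (1:ℝ)) m1 m2)) :=
      E_congr _ _ _ (fun a b _ => by simp only []; push_cast; ring)
    rw [step2, E_add, E_add, E_const_mul, mom2, mom1, mass]
    push_cast; ring

lemma mom4 (p q : ℝ) (n : ℕ) :
    E p q n (fun (m1 : ℕ) (_ : ℕ) => (m1 : ℝ) ^ 4)
      = n * p + 7 * n * ((n : ℝ) - 1) * p ^ 2
        + 6 * n * ((n : ℝ) - 1) * ((n : ℝ) - 2) * p ^ 3
        + n * ((n : ℝ) - 1) * ((n : ℝ) - 2) * ((n : ℝ) - 3) * p ^ 4 := by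
  cases n with
  | zero => simp [E, W]
  | succ n =>
    have step1 : E p q (n + 1) (fun (m1 : ℕ) (_ : ℕ) => (m1 : ℝ) ^ 4)
        = E p q (n + 1) (fun m1 m2 => (m1 : ℝ) * (fun (m1 : ℕ) (_ : ℕ) => (m1 : ℝ) ^ 3) m1 m2) :=
      E_congr _ _ _ (fun a b _ => by simp only []; ring)
    rw [step1, shift1]
    have step2 : E p q n (fun m1 m2 => (fun (m1 : ℕ) (_ : ℕ) => (m1 : ℝ) ^ 3) (m1 + 1) m2)
        = E p q n (fun m1 m2 => (fun (m1 : ℕ) (_ : ℕ) => (m1 : ℝ) ^ 3) m1 m2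
            + ((fun m1 m2 => (3:ℝ) * (fun (m1 : ℕ) (_ : ℕ) => (m1 : ℝ) ^ 2) m1 m2) m1 m2
              + ((fun m1 m2 => (3:ℝ) * (fun (m1 : ℕ) (_ : ℕ) => (m1 : ℝ)) m1 m2) m1 m2
                + (fun _ _ => (1:ℝ)) m1 m2))) :=
      E_congr _ _ _ (fun a b _ => by simp only []; push_cast; ring)
    rw [step2, E_add, E_add, E_add, E_const_mul, E_const_mul, mom3, mom2, mom1, mass]
    push_cast; ring

lemma momu2 (p q : ℝ) (n : ℕ) (hn : n ≠ 0) :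
    E p q n (fun (m1 : ℕ) (_ : ℕ) => ((m1:ℝ)/n - p)^2) = p*(1-p)/n := by
  have step : E p q n (fun (m1 : ℕ) (_ : ℕ) => ((m1:ℝ)/n - p)^2)
      = E p q n (fun m1 m2 => (fun m1 m2 => (1/(n:ℝ)^2) * (fun (m1:ℕ) (_:ℕ) => (m1:ℝ)^2) m1 m2) m1 m2
          + ((fun m1 m2 => (-(2*p)/n) * (fun (m1:ℕ) (_:ℕ) => (m1:ℝ)) m1 m2) m1 m2
            + (fun m1 m2 => (p^2) * (fun (_:ℕ) (_:ℕ) => (1:ℝ)) m1 m2) m1 m2)) :=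
    E_congr _ _ _ (fun a b _ => by simp only []; ring)
  rw [step, E_add, E_add, E_const_mul, E_const_mul, E_const_mul, mom2, mom1, mass]
  have hn' : (n:ℝ) ≠ 0 := Nat.cast_ne_zero.2 hn
  field_simp
  ring

lemma momu4 (p q : ℝ) (n : ℕ) (hn : n ≠ 0) :
    E p q n (fun (m1 : ℕ) (_ : ℕ) => ((m1:ℝ)/n - p)^4)
      = (3*(n:ℝ)^2*p^2*(1-p)^2 + n*p*(1-p)*(1-6*p*(1-p)))/(n:ℝ)^4 := by
  have step : E p q n (fun (m1 : ℕ) (_ : ℕ) => ((m1:ℝ)/n - p)^4)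
      = E p q n (fun m1 m2 => (fun m1 m2 => (1/(n:ℝ)^4) * (fun (m1:ℕ) (_:ℕ) => (m1:ℝ)^4) m1 m2) m1 m2
          + ((fun m1 m2 => (-(4*p)/(n:ℝ)^3) * (fun (m1:ℕ) (_:ℕ) => (m1:ℝ)^3) m1 m2) m1 m2
            + ((fun m1 m2 => (6*p^2/(n:ℝ)^2) * (fun (m1:ℕ) (_:ℕ) => (m1:ℝ)^2) m1 m2) m1 m2
              + ((fun m1 m2 => (-(4*p^3)/n) * (fun (m1:ℕ) (_:ℕ) => (m1:ℝ)) m1 m2) m1 m2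
                + (fun m1 m2 => (p^4) * (fun (_:ℕ) (_:ℕ) => (1:ℝ)) m1 m2) m1 m2)))) :=
    E_congr _ _ _ (fun a b _ => by simp only []; ring)
  rw [step, E_add, E_add, E_add, E_add, E_const_mul, E_const_mul, E_const_mul,
    E_const_mul, E_const_mul, mom4, mom3, mom2, mom1, mass]
  have hn' : (n:ℝ) ≠ 0 := Nat.cast_ne_zero.2 hn
  field_simp
  ring

lemma momuv (p q : ℝ) (n : ℕ) (hn : n ≠ 0) :
    E p q n (fun (m1 : ℕ) (m2 : ℕ) => ((m1:ℝ)/n - p) * ((m2:ℝ)/n - q)) = -(p*q)/n := by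
  have step : E p q n (fun (m1 : ℕ) (m2 : ℕ) => ((m1:ℝ)/n - p) * ((m2:ℝ)/n - q))
      = E p q n (fun m1 m2 => (fun m1 m2 => (1/(n:ℝ)^2) * (fun (m1:ℕ) (m2:ℕ) => (m1:ℝ)*(m2:ℝ)) m1 m2) m1 m2
          + ((fun m1 m2 => (-p/n) * (fun (_:ℕ) (m2:ℕ) => (m2:ℝ)) m1 m2) m1 m2
            + ((fun m1 m2 => (-q/n) * (fun (m1:ℕ) (_:ℕ) => (m1:ℝ)) m1 m2) m1 m2
              + (fun m1 m2 => (p*q) * (fun (_:ℕ) (_:ℕ) => (1:ℝ)) m1 m2) m1 m2))) :=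
    E_congr _ _ _ (fun a b _ => by simp only []; ring)
  rw [step, E_add, E_add, E_add, E_const_mul, E_const_mul, E_const_mul, E_const_mul,
    mom11, mom01, mom1, mass]
  have hn' : (n:ℝ) ≠ 0 := Nat.cast_ne_zero.2 hn
  field_simp
  ring

lemma momv2 (p q : ℝ) (n : ℕ) (hn : n ≠ 0) :
    E p q n (fun (_ : ℕ) (m2 : ℕ) => ((m2:ℝ)/n - q)^2) = q*(1-q)/n := by
  rw [E_symm]
  have step : E q p n (fun m1 m2 => (fun (_ : ℕ) (m2 : ℕ) => ((m2:ℝ)/n - q)^2) m2 m1)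
      = E q p n (fun (m1 : ℕ) (_ : ℕ) => ((m1:ℝ)/n - q)^2) := E_congr _ _ _ (fun a b _ => rfl)
  rw [step, momu2 q p n hn]

lemma momv4 (p q : ℝ) (n : ℕ) (hn : n ≠ 0) :
    E p q n (fun (_ : ℕ) (m2 : ℕ) => ((m2:ℝ)/n - q)^4)
      = (3*(n:ℝ)^2*q^2*(1-q)^2 + n*q*(1-q)*(1-6*q*(1-q)))/(n:ℝ)^4 := by
  rw [E_symm]
  have step : E q p n (fun m1 m2 => (fun (_ : ℕ) (m2 : ℕ) => ((m2:ℝ)/n - q)^4) m2 m1)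
      = E q p n (fun (m1 : ℕ) (_ : ℕ) => ((m1:ℝ)/n - q)^4) := E_congr _ _ _ (fun a b _ => rfl)
  rw [step, momu4 q p n hn]

lemma cm4_le (p : ℝ) (n : ℕ) (hn : 1 ≤ n) (hp0 : 0 ≤ p) (hp1 : p ≤ 1) :
    (3*(n:ℝ)^2*p^2*(1-p)^2 + n*p*(1-p)*(1-6*p*(1-p)))/(n:ℝ)^4 ≤ 1/(n:ℝ)^2 := by
  have hn' : (1:ℝ) ≤ (n:ℝ) := by exact_mod_cast hn
  have hn0 : (0:ℝ) < (n:ℝ) := by linarith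
  rw [div_le_div_iff₀ (by positivity) (by positivity)]
  have hs : p*(1-p) ≤ 1/4 := by nlinarith [sq_nonneg (p - 1/2)]
  have hs0 : 0 ≤ p*(1-p) := by nlinarith
  nlinarith [sq_nonneg ((n:ℝ)*(p*(1-p))), mul_le_mul_of_nonneg_left hs (le_of_lt (by positivity : (0:ℝ) < (n:ℝ)^3)),
    mul_le_mul_of_nonneg_left (mul_le_mul hs hs hs0 (by norm_num)) (sq_nonneg (n:ℝ)),
    mul_le_mul_of_nonneg_left (mul_le_mul hs hs hs0 (by norm_num)) (le_of_lt (by positivity : (0:ℝ) < (n:ℝ)^3)),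
    pow_le_pow_left₀ (by norm_num : (0:ℝ) ≤ 1) hn' 4, one_le_pow₀ hn' (n := 3),
    mul_le_mul_of_nonneg_left hs0 (le_of_lt (by positivity : (0:ℝ) < (n:ℝ)^3))]

lemma core (a b t A B U V : ℝ) (ha : 0 < a) (hb : 0 < b) (ht : 0 < t)
    (hA0 : 0 ≤ A) (hB0 : 0 ≤ B) (hU : A*a ≤ U) (hV : B*b ≤ V) :
    A*B*(2*A + 2*a*B)/(4*a*b)
      ≤ 1/(2*a^3*b^2) * ((t*U^4 + V^2/t)/2) + 1/(2*a*b^3) * ((U^2/t + t*V^4)/2) := by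
  have hU0 : 0 ≤ U := le_trans (mul_nonneg hA0 ha.le) hU
  have hV0 : 0 ≤ V := le_trans (mul_nonneg hB0 hb.le) hV
  have e1 : (A*a)^2*(B*b) ≤ U^2*V :=
    mul_le_mul (pow_le_pow_left₀ (by positivity) hU 2) hV (by positivity) (by positivity)
  have e2 : (A*a)*(B*b)^2 ≤ U*V^2 :=
    mul_le_mul hU (pow_le_pow_left₀ (by positivity) hV 2) (by positivity) hU0
  have am1 : U^2*V ≤ (t*U^4 + V^2/t)/2 := by
    have h1 : U^2*V ≤ (t^2*U^4 + V^2)/(2*t) := by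
      rw [le_div_iff₀ (by positivity)]
      nlinarith [sq_nonneg (t*U^2 - V)]
    have h2 : (t^2*U^4 + V^2)/(2*t) = (t*U^4 + V^2/t)/2 := by
      field_simp
    linarith
  have am2 : U*V^2 ≤ (U^2/t + t*V^4)/2 := by
    have h1 : U*V^2 ≤ (U^2 + t^2*V^4)/(2*t) := by
      rw [le_div_iff₀ (by positivity)]
      nlinarith [sq_nonneg (U - t*V^2)]
    have h2 : (U^2 + t^2*V^4)/(2*t) = (U^2/t + t*V^4)/2 := by
      field_simp
    linarith
  have bound : A*B*(2*A+2*a*B)*(a^2*b^2) ≤ 2*b*(U^2*V) + 2*a^2*(U*V^2) := by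
    nlinarith [mul_le_mul_of_nonneg_left e1 (by positivity : (0:ℝ) ≤ 2*b),
      mul_le_mul_of_nonneg_left e2 (by positivity : (0:ℝ) ≤ 2*a^2)]
  have key : A*B*(2*A+2*a*B)/(4*a*b) ≤ 1/(2*a^3*b^2)*(U^2*V) + 1/(2*a*b^3)*(U*V^2) := by
    have lhs_eq : A*B*(2*A+2*a*B)/(4*a*b) = A*B*(2*A+2*a*B)*(a^2*b^2)/(4*a^3*b^3) := by
      rw [div_eq_div_iff (by positivity) (by positivity)]; ring
    have rhs_eq : 1/(2*a^3*b^2)*(U^2*V) + 1/(2*a*b^3)*(U*V^2)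
        = (2*b*(U^2*V) + 2*a^2*(U*V^2))/(4*a^3*b^3) := by
      field_simp; ring
    rw [lhs_eq, rhs_eq]
    exact div_le_div_of_nonneg_right bound (by positivity)
  have f1 := mul_le_mul_of_nonneg_left am1 (by positivity : (0:ℝ) ≤ 1/(2*a^3*b^2))
  have f2 := mul_le_mul_of_nonneg_left am2 (by positivity : (0:ℝ) ≤ 1/(2*a*b^3))
  linarith

lemma abstract_ptwise (a b x y t : ℝ) (ha : 0 < a) (hb : 0 < b)
    (ha1 : a ≤ 1) (hb1 : b ≤ 1) (hx0 : 0 ≤ x) (hx1 : x ≤ 1)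
    (hy0 : 0 ≤ y) (hy1 : y ≤ 1) (ht : 0 < t) :
    |(x - a) * (y - b) - (x^2 - a^2) * (y^2 - b^2) / (4*a*b)|
      ≤ 1/(2*a^3*b^2) * ((t*(x^2-a^2)^4 + (y^2-b^2)^2/t)/2)
        + 1/(2*a*b^3) * (((x^2-a^2)^2/t + t*(y^2-b^2)^4)/2) := by
  have hA0 : (0:ℝ) ≤ |x - a| := abs_nonneg _
  have hB0 : (0:ℝ) ≤ |y - b| := abs_nonneg _
  have hAa : |x - a| * a ≤ |x^2 - a^2| := by
    have h1 : |x^2 - a^2| = |x - a| * (x + a) := by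
      rw [show x^2 - a^2 = (x - a) * (x + a) from by ring, abs_mul,
        abs_of_nonneg (by linarith : (0:ℝ) ≤ x + a)]
    nlinarith [h1]
  have hBb : |y - b| * b ≤ |y^2 - b^2| := by
    have h1 : |y^2 - b^2| = |y - b| * (y + b) := by
      rw [show y^2 - b^2 = (y - b) * (y + b) from by ring, abs_mul,
        abs_of_nonneg (by linarith : (0:ℝ) ≤ y + b)]
    nlinarith [h1]
  have step1 : |(x - a) * (y - b) - (x^2 - a^2) * (y^2 - b^2) / (4*a*b)|
      ≤ |x - a| * |y - b| * (2 * |x - a| + 2*a * |y - b|) / (4*a*b) := by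
    have he : (x - a) * (y - b) - (x^2 - a^2) * (y^2 - b^2) / (4*a*b)
        = (x - a) * (y - b) * (4*a*b - (x+a)*(y+b)) / (4*a*b) := by
      field_simp
      ring
    rw [he, abs_div, abs_of_pos (by positivity : (0:ℝ) < 4*a*b), abs_mul, abs_mul]
    apply div_le_div_of_nonneg_right ?_ (by positivity)
    have hD : |4*a*b - (x+a)*(y+b)| ≤ |x - a| * (y+b) + 2*a * |y - b| := by
      rw [show 4*a*b - (x+a)*(y+b) = -((x-a)*(y+b) + 2*a*(y-b)) from by ring, abs_neg]
      refine (abs_add_le _ _).trans ?_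
      rw [abs_mul, abs_mul, abs_of_nonneg (by linarith : (0:ℝ) ≤ y+b),
        abs_of_nonneg (by linarith : (0:ℝ) ≤ 2*a)]
    have hD2 : |4*a*b - (x+a)*(y+b)| ≤ 2 * |x - a| + 2*a * |y - b| := by nlinarith [hD]
    nlinarith [mul_le_mul_of_nonneg_left hD2 (mul_nonneg hA0 hB0)]
  have hcore := core a b t (|x - a|) (|y - b|) (|x^2 - a^2|) (|y^2 - b^2|)
    ha hb ht hA0 hB0 hAa hBb
  have r1 : |x^2 - a^2|^4 = (x^2 - a^2)^4 := by
    rw [pow_abs, abs_of_nonneg (by positivity)]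
  have r2 : |x^2 - a^2|^2 = (x^2 - a^2)^2 := sq_abs _
  have r3 : |y^2 - b^2|^4 = (y^2 - b^2)^4 := by
    rw [pow_abs, abs_of_nonneg (by positivity)]
  have r4 : |y^2 - b^2|^2 = (y^2 - b^2)^2 := sq_abs _
  rw [r1, r2, r3, r4] at hcore
  linarith

lemma W_nonneg (p q : ℝ) (hp : 0 ≤ p) (hq : 0 ≤ q) (hpq : p + q ≤ 1) (n m1 m2 : ℕ) :
    0 ≤ W p q n m1 m2 := by
  have h1 : (0:ℝ) ≤ 1 - p - q := by linarith
  unfold W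
  positivity

lemma E_abs_le (p q : ℝ) (hp : 0 ≤ p) (hq : 0 ≤ q) (hpq : p + q ≤ 1) (n : ℕ)
    (f g : ℕ → ℕ → ℝ) (h : ∀ m1 m2, m1 + m2 ≤ n → |f m1 m2| ≤ g m1 m2) :
    |E p q n f| ≤ E p q n g := by
  unfold E
  refine (Finset.abs_sum_le_sum_abs _ _).trans (Finset.sum_le_sum fun m1 hm1 => ?_)
  refine (Finset.abs_sum_le_sum_abs _ _).trans (Finset.sum_le_sum fun m2 hm2 => ?_)
  rw [Finset.mem_range] at hm1 hm2
  rw [abs_mul, abs_of_nonneg (W_nonneg p q hp hq hpq n m1 m2)]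
  exact mul_le_mul_of_nonneg_right (h m1 m2 (by omega)) (W_nonneg p q hp hq hpq n m1 m2)

lemma key (p q : ℝ) (hp : 0 < p) (hq : 0 < q) (hpq : p + q < 1) (n : ℕ) (hn : 1 ≤ n) :
    |(n:ℝ) * E p q n (fun m1 m2 =>
        (Real.sqrt ((m1:ℝ)/(n:ℝ)) - Real.sqrt p) * (Real.sqrt ((m2:ℝ)/(n:ℝ)) - Real.sqrt q))
      - (-Real.sqrt (p*q)/4)|
    ≤ (1/(2*Real.sqrt p^3*q) + 1/(2*Real.sqrt p*Real.sqrt q^3)) / Real.sqrt n := by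
  have hp1 : p < 1 := by linarith
  have hq1 : q < 1 := by linarith
  have hn0 : (0:ℝ) < n := by exact_mod_cast hn
  have hnne : n ≠ 0 := by omega
  set a := Real.sqrt p with ha'
  set b := Real.sqrt q with hb'
  set t := Real.sqrt (n:ℝ) with ht'
  have ha : 0 < a := Real.sqrt_pos.2 hp
  have hb : 0 < b := Real.sqrt_pos.2 hq
  have ht : 0 < t := Real.sqrt_pos.2 hn0
  have ha2 : a^2 = p := Real.sq_sqrt hp.le
  have hb2 : b^2 = q := Real.sq_sqrt hq.le
  have ht2 : t^2 = (n:ℝ) := Real.sq_sqrt hn0.le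
  have ha1 : a ≤ 1 := Real.sqrt_le_one.mpr hp1.le
  have hb1 : b ≤ 1 := Real.sqrt_le_one.mpr hq1.le
  have b4u := cm4_le p n hn hp.le hp1.le
  have b4v := cm4_le q n hn hq.le hq1.le
  have b2u : p*(1-p)/(n:ℝ) ≤ 1/(n:ℝ) := by
    rw [div_le_div_iff₀ hn0 hn0]
    nlinarith
  have b2v : q*(1-q)/(n:ℝ) ≤ 1/(n:ℝ) := by
    rw [div_le_div_iff₀ hn0 hn0]
    nlinarith
  have c1 : (0:ℝ) ≤ 1/(2*a^3*q)*t/2 := by positivity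
  have c2 : (0:ℝ) ≤ 1/(2*a^3*q)/(2*t) := by positivity
  have c3 : (0:ℝ) ≤ 1/(2*a*b^3)/(2*t) := by positivity
  have c4 : (0:ℝ) ≤ 1/(2*a*b^3)*t/2 := by positivity
  -- decompose F = G + R
  have decomp : E p q n (fun m1 m2 =>
        (Real.sqrt ((m1:ℝ)/(n:ℝ)) - a) * (Real.sqrt ((m2:ℝ)/(n:ℝ)) - b))
      = E p q n (fun m1 m2 =>
          (fun m1 m2 => (1/(4*a*b)) *
            (fun (m1:ℕ) (m2:ℕ) => ((m1:ℝ)/n - p)*((m2:ℝ)/n - q)) m1 m2) m1 m2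
          + (fun (m1:ℕ) (m2:ℕ) =>
              (Real.sqrt ((m1:ℝ)/(n:ℝ)) - a) * (Real.sqrt ((m2:ℝ)/(n:ℝ)) - b)
                - (1/(4*a*b)) * (((m1:ℝ)/n - p)*((m2:ℝ)/n - q))) m1 m2) :=
    E_congr _ _ _ (fun c d _ => by simp only []; ring)
  rw [decomp, E_add, E_const_mul, momuv p q n hnne]
  have hsq : Real.sqrt (p*q) = a*b := Real.sqrt_mul hp.le q
  have hG : (n:ℝ) * (1/(4*a*b) * (-(p*q)/n)
        + E p q n (fun (m1:ℕ) (m2:ℕ) =>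
            (Real.sqrt ((m1:ℝ)/(n:ℝ)) - a) * (Real.sqrt ((m2:ℝ)/(n:ℝ)) - b)
              - (1/(4*a*b)) * (((m1:ℝ)/n - p)*((m2:ℝ)/n - q))))
        - (-Real.sqrt (p*q)/4)
      = (n:ℝ) * E p q n (fun (m1:ℕ) (m2:ℕ) =>
            (Real.sqrt ((m1:ℝ)/(n:ℝ)) - a) * (Real.sqrt ((m2:ℝ)/(n:ℝ)) - b)
              - (1/(4*a*b)) * (((m1:ℝ)/n - p)*((m2:ℝ)/n - q))) := by
    rw [hsq, ← ha2, ← hb2]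
    field_simp
    ring
  rw [hG, abs_mul, abs_of_pos hn0]
  -- pointwise bound on R
  have hptw : ∀ m1 m2 : ℕ, m1 + m2 ≤ n →
      |(Real.sqrt ((m1:ℝ)/(n:ℝ)) - a) * (Real.sqrt ((m2:ℝ)/(n:ℝ)) - b)
          - (1/(4*a*b)) * (((m1:ℝ)/n - p)*((m2:ℝ)/n - q))|
        ≤ (fun (m1:ℕ) (m2:ℕ) =>
            (fun m1 m2 => (1/(2*a^3*q)*t/2) *
              (fun (m1:ℕ) (_:ℕ) => ((m1:ℝ)/n - p)^4) m1 m2) m1 m2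
            + ((fun m1 m2 => (1/(2*a^3*q)/(2*t)) *
                (fun (_:ℕ) (m2:ℕ) => ((m2:ℝ)/n - q)^2) m1 m2) m1 m2
              + ((fun m1 m2 => (1/(2*a*b^3)/(2*t)) *
                  (fun (m1:ℕ) (_:ℕ) => ((m1:ℝ)/n - p)^2) m1 m2) m1 m2
                + (fun m1 m2 => (1/(2*a*b^3)*t/2) *
                    (fun (_:ℕ) (m2:ℕ) => ((m2:ℝ)/n - q)^4) m1 m2) m1 m2))) m1 m2 := by
    intro m1 m2 hm
    have hm1n : (m1:ℝ)/n ≤ 1 := by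
      rw [div_le_one hn0]
      exact_mod_cast le_trans (Nat.le_add_right m1 m2) hm
    have hm2n : (m2:ℝ)/n ≤ 1 := by
      rw [div_le_one hn0]
      exact_mod_cast le_trans (Nat.le_add_left m2 m1) hm
    have hx0 : 0 ≤ Real.sqrt ((m1:ℝ)/n) := Real.sqrt_nonneg _
    have hy0 : 0 ≤ Real.sqrt ((m2:ℝ)/n) := Real.sqrt_nonneg _
    have hx1 : Real.sqrt ((m1:ℝ)/n) ≤ 1 := Real.sqrt_le_one.mpr hm1n
    have hy1 : Real.sqrt ((m2:ℝ)/n) ≤ 1 := Real.sqrt_le_one.mpr hm2n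
    have hxx : (Real.sqrt ((m1:ℝ)/n))^2 = (m1:ℝ)/n := Real.sq_sqrt (by positivity)
    have hyy : (Real.sqrt ((m2:ℝ)/n))^2 = (m2:ℝ)/n := Real.sq_sqrt (by positivity)
    have hcore := abstract_ptwise a b (Real.sqrt ((m1:ℝ)/n)) (Real.sqrt ((m2:ℝ)/n)) t
      ha hb ha1 hb1 hx0 hx1 hy0 hy1 ht
    rw [hxx, hyy, ha2, hb2] at hcore
    simp only []
    calc |(Real.sqrt ((m1:ℝ)/(n:ℝ)) - a) * (Real.sqrt ((m2:ℝ)/(n:ℝ)) - b)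
          - (1/(4*a*b)) * (((m1:ℝ)/n - p)*((m2:ℝ)/n - q))|
        = |(Real.sqrt ((m1:ℝ)/(n:ℝ)) - a) * (Real.sqrt ((m2:ℝ)/(n:ℝ)) - b)
          - ((m1:ℝ)/n - p)*((m2:ℝ)/n - q)/(4*a*b)| := by
          rw [show (1/(4*a*b)) * (((m1:ℝ)/n - p)*((m2:ℝ)/n - q))
              = ((m1:ℝ)/n - p)*((m2:ℝ)/n - q)/(4*a*b) from by ring]
      _ ≤ 1/(2*a^3*q) * ((t*((m1:ℝ)/n - p)^4 + ((m2:ℝ)/n - q)^2/t)/2)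
            + 1/(2*a*b^3) * ((((m1:ℝ)/n - p)^2/t + t*((m2:ℝ)/n - q)^4)/2) := hcore
      _ = (1/(2*a^3*q)*t/2) * ((m1:ℝ)/n - p)^4
            + ((1/(2*a^3*q)/(2*t)) * ((m2:ℝ)/n - q)^2
              + ((1/(2*a*b^3)/(2*t)) * ((m1:ℝ)/n - p)^2
                + (1/(2*a*b^3)*t/2) * ((m2:ℝ)/n - q)^4)) := by
          field_simp
          ring
  have hR := E_abs_le p q hp.le hq.le hpq.le n _ _ hptw
  -- evaluate E of the bound
  rw [E_add, E_add, E_add, E_const_mul, E_const_mul, E_const_mul, E_const_mul,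
    momu4 p q n hnne, momu2 p q n hnne, momv2 p q n hnne, momv4 p q n hnne] at hR
  have comb : |E p q n (fun (m1:ℕ) (m2:ℕ) =>
      (Real.sqrt ((m1:ℝ)/(n:ℝ)) - a) * (Real.sqrt ((m2:ℝ)/(n:ℝ)) - b)
        - (1/(4*a*b)) * (((m1:ℝ)/n - p)*((m2:ℝ)/n - q)))|
      ≤ (1/(2*a^3*q)*t/2) * (1/(n:ℝ)^2)
        + (1/(2*a^3*q)/(2*t)) * (1/(n:ℝ))
        + (1/(2*a*b^3)/(2*t)) * (1/(n:ℝ))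
        + (1/(2*a*b^3)*t/2) * (1/(n:ℝ)^2) := by
    refine hR.trans ?_
    have i1 := mul_le_mul_of_nonneg_left b4u c1
    have i2 := mul_le_mul_of_nonneg_left b2v c2
    have i3 := mul_le_mul_of_nonneg_left b2u c3
    have i4 := mul_le_mul_of_nonneg_left b4v c4
    linarith
  have harith : (n:ℝ) * ((1/(2*a^3*q)*t/2) * (1/(n:ℝ)^2)
        + (1/(2*a^3*q)/(2*t)) * (1/(n:ℝ))
        + (1/(2*a*b^3)/(2*t)) * (1/(n:ℝ))
        + (1/(2*a*b^3)*t/2) * (1/(n:ℝ)^2))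
      = (1/(2*a^3*q) + 1/(2*a*b^3))/t := by
    rw [← ht2]
    field_simp
    ring
  calc (n:ℝ) * |E p q n (fun (m1:ℕ) (m2:ℕ) =>
      (Real.sqrt ((m1:ℝ)/(n:ℝ)) - a) * (Real.sqrt ((m2:ℝ)/(n:ℝ)) - b)
        - (1/(4*a*b)) * (((m1:ℝ)/n - p)*((m2:ℝ)/n - q)))|
      ≤ (n:ℝ) * ((1/(2*a^3*q)*t/2) * (1/(n:ℝ)^2)
        + (1/(2*a^3*q)/(2*t)) * (1/(n:ℝ))
        + (1/(2*a*b^3)/(2*t)) * (1/(n:ℝ))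
        + (1/(2*a*b^3)*t/2) * (1/(n:ℝ)^2)) := mul_le_mul_of_nonneg_left comb hn0.le
    _ = (1/(2*a^3*q) + 1/(2*a*b^3))/t := harith

end Stmt14Aux

theorem stmt14 (p q : ℝ) (hp : 0 < p) (hq : 0 < q) (hpq : p + q < 1) :
    Tendsto (fun n : ℕ =>
        (n : ℝ) * ∑ m1 ∈ Finset.range (n + 1), ∑ m2 ∈ Finset.range (n + 1 - m1),
          (Real.sqrt (m1 / n) - Real.sqrt p) * (Real.sqrt (m2 / n) - Real.sqrt q) *
            ((Nat.factorial n : ℝ) /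
                (Nat.factorial m1 * Nat.factorial m2 * Nat.factorial (n - m1 - m2)) *
              p ^ m1 * q ^ m2 * (1 - p - q) ^ (n - m1 - m2)))
      atTop (nhds (-Real.sqrt (p * q) / 4)) := by
  have main : Tendsto (fun n : ℕ => (n:ℝ) * Stmt14Aux.E p q n (fun m1 m2 =>
      (Real.sqrt ((m1:ℝ)/(n:ℝ)) - Real.sqrt p) * (Real.sqrt ((m2:ℝ)/(n:ℝ)) - Real.sqrt q)))
      atTop (nhds (-Real.sqrt (p * q) / 4)) := by
    have hsqrt : Tendsto (fun n : ℕ => Real.sqrt n) atTop atTop := by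
      rw [tendsto_atTop_atTop]
      intro b
      refine ⟨(⌈b⌉₊)^2, fun n hn => ?_⟩
      have h1 : ((⌈b⌉₊:ℝ))^2 ≤ (n:ℝ) := by exact_mod_cast hn
      calc b ≤ (⌈b⌉₊:ℝ) := Nat.le_ceil b
        _ = Real.sqrt (((⌈b⌉₊:ℝ))^2) := (Real.sqrt_sq (by positivity)).symm
        _ ≤ Real.sqrt n := Real.sqrt_le_sqrt h1
    have hC : Tendsto (fun n : ℕ =>
        (1/(2*Real.sqrt p^3*q) + 1/(2*Real.sqrt p*Real.sqrt q^3)) / Real.sqrt n)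
        atTop (nhds 0) := Tendsto.div_atTop tendsto_const_nhds hsqrt
    have hzero : Tendsto (fun n : ℕ => (n:ℝ) * Stmt14Aux.E p q n (fun m1 m2 =>
        (Real.sqrt ((m1:ℝ)/(n:ℝ)) - Real.sqrt p) * (Real.sqrt ((m2:ℝ)/(n:ℝ)) - Real.sqrt q))
        - (-Real.sqrt (p * q) / 4)) atTop (nhds 0) := by
      refine squeeze_zero_norm' ?_ hC
      filter_upwards [eventually_ge_atTop 1] with n hn
      rw [Real.norm_eq_abs]
      exact Stmt14Aux.key p q hp hq hpq n hn
    have := hzero.add (tendsto_const_nhds :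
      Tendsto (fun _ : ℕ => -Real.sqrt (p * q) / 4) atTop (nhds (-Real.sqrt (p * q) / 4)))
    rw [zero_add] at this
    convert this using 2 with n
    ring
  exact main
end
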